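/- Let R be a ℚ-algebra. Any homomorphism of group functors φ from the additive group functor 𝔪 (where 𝔪(R') = u·R'[[u]] + t·R'((u))[[t]] for R-algebras R') to the multiplicative group 𝔾ₘ, given by a natural transformation of functors of points, is continuous on R-points: there exist i, j ∈ ℕ such that φ vanishes on u^j R[[u,t]] + t^i R((u))[[t]]. -/

import Mathlib

noncomputable section

namespace CC

universe u

variable {R : Type u} [CommRing R]

/-- Coefficientwise map of Laurent series along a ring homomorphism. -/
def mapLS {S : Type*} [CommRing S] (ψ : R →+* S) (x : LaurentSeries R) : LaurentSeries S where
  coeff n := ψ (x.coeff n)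
  isPWO_support' := by
    refine x.isPWO_support'.mono ?_
    intro n hn
    have h1 : ψ (x.coeff n) ≠ 0 := hn
    exact fun h => h1 (by rw [h, map_zero])

lemma mapLS_zero {S : Type*} [CommRing S] (ψ : R →+* S) :
    mapLS ψ (0 : LaurentSeries R) = 0 := by
  ext n
  exact map_zero ψ

/-- Coefficientwise map of iterated Laurent series along a ring homomorphism. -/
def mapLL {S : Type*} [CommRing S] (ψ : R →+* S) (x : LaurentSeries (LaurentSeries R)) :
    LaurentSeries (LaurentSeries S) where
  coeff s := mapLS ψ (x.coeff s)
  isPWO_support' := by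
    refine x.isPWO_support'.mono ?_
    intro s hs
    have h1 : mapLS ψ (x.coeff s) ≠ 0 := hs
    exact fun h => h1 (by rw [h, mapLS_zero])

/-- `x ∈ 𝔪(S) = u·S[[u]] + t·S((u))[[t]]` inside `S((u))((t))`. -/
def InM {S : Type*} [CommRing S] (x : LaurentSeries (LaurentSeries S)) : Prop :=
  (∀ s : ℤ, s < 0 → x.coeff s = 0) ∧ (∀ w : ℤ, w ≤ 0 → (x.coeff 0).coeff w = 0)

/-- `x ∈ 𝔲_{i,j}(S) = u^j·S[[u,t]] + t^i·S((u))[[t]]`. -/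
def MemUij {S : Type*} [CommRing S] (i j : ℕ) (x : LaurentSeries (LaurentSeries S)) : Prop :=
  (∀ s : ℤ, s < 0 → x.coeff s = 0) ∧
  (∀ s : ℤ, 0 ≤ s → s < (i : ℤ) → ∀ w : ℤ, w < (j : ℤ) → (x.coeff s).coeff w = 0)

lemma isPWO_Ici_int (a : ℤ) : (Set.Ici a).IsPWO := by
  have h0 : (Set.univ : Set ℕ).IsPWO :=
    (Set.isWF_univ_iff.2 ⟨wellFounded_lt⟩).isPWO
  have h1 : Monotone (fun n : ℕ => a + (n : ℤ)) := by
    intro m n hmn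
    simp only
    omega
  refine (h0.image_of_monotone h1).mono ?_
  intro z hz
  simp only [Set.image_univ, Set.mem_range]
  exact ⟨(z - a).toNat, by simp only [Set.mem_Ici] at hz; omega⟩

lemma isPWO_biUnion_range (f : ℕ → Set ℤ) (h : ∀ n, (f n).IsPWO) (N : ℕ) :
    (⋃ n ∈ Finset.range N, f n).IsPWO := by
  induction N with
  | zero => simp
  | succ N ih =>
      rw [Finset.range_add_one, Finset.set_biUnion_insert]
      exact (h N).union ih

variable (x : ℕ → LaurentSeries (LaurentSeries R))

/-- inner coefficient of `Y = Σ Xₙ xₙ` at `(s, w)`. -/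
def bigC (s w : ℤ) : MvPolynomial ℕ R :=
  ∑ n ∈ Finset.range ((max s w).toNat + 1),
    MvPolynomial.X n * MvPolynomial.C (((x n).coeff s).coeff w)

variable (hx : ∀ n, InM (x n)) (hU : ∀ n, MemUij n n (x n))

set_option linter.unusedSectionVars false

include hx hU

lemma term_zero {n : ℕ} {s w : ℤ} (h : max s w < (n : ℤ)) :
    ((x n).coeff s).coeff w = 0 := by
  rcases lt_or_ge s 0 with hs | hs
  · rw [(hx n).1 s hs]; rfl
  · exact (hU n).2 s hs (lt_of_le_of_lt (le_max_left _ _) h) w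
      (lt_of_le_of_lt (le_max_right _ _) h)

lemma bigC_zero_of_neg {s w : ℤ} (hs : s < 0) : bigC x s w = 0 := by
  unfold bigC
  refine Finset.sum_eq_zero fun n _ => ?_
  rw [(hx n).1 s hs]
  show MvPolynomial.X n * MvPolynomial.C ((0 : LaurentSeries R).coeff w) = 0
  simp

lemma bigC_coeff_ne {s w : ℤ} (h : bigC x s w ≠ 0) :
    ∃ n, ((x n).coeff s).coeff w ≠ 0 := by
  obtain ⟨n, -, hn⟩ := Finset.exists_ne_zero_of_sum_ne_zero h
  refine ⟨n, fun h0 => hn ?_⟩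
  rw [h0]
  simp

/-- the inner Laurent series `Y.coeff s`. -/
def innerS (s : ℤ) : LaurentSeries (MvPolynomial ℕ R) where
  coeff w := bigC x s w
  isPWO_support' := by
    refine Set.IsPWO.mono
      ((isPWO_biUnion_range (fun n => ((x n).coeff s).support)
        (fun n => ((x n).coeff s).isPWO_support) (s.toNat + 1)).union
        (isPWO_Ici_int (s + 1))) ?_
    intro w hw
    have hw' : bigC x s w ≠ 0 := hw
    obtain ⟨n, hn⟩ := bigC_coeff_ne x hx hU hw'
    have hs : 0 ≤ s := by
      by_contra hs
      exact hn (by rw [(hx n).1 s (by omega)]; rfl)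
    rcases lt_or_ge n (s.toNat + 1) with hns | hns
    · left
      simp only [Set.mem_iUnion]
      exact ⟨n, Finset.mem_range.2 hns, hn⟩
    · right
      have hsn : s < (n : ℤ) := by omega
      have hwn : (n : ℤ) ≤ w := by
        by_contra hwn
        exact hn ((hU n).2 s hs hsn w (by omega))
      simp only [Set.mem_Ici]
      omega

/-- the universal element `Y = Σ Xₙ xₙ`. -/
def bigY : LaurentSeries (LaurentSeries (MvPolynomial ℕ R)) where
  coeff s := @innerS R _ x hx hU s
  isPWO_support' := by
    refine (isPWO_Ici_int 0).mono ?_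
    intro s hs
    have hs' : @innerS R _ x hx hU s ≠ 0 := hs
    simp only [Set.mem_Ici]
    by_contra h
    refine hs' (HahnSeries.ext (funext fun w => ?_))
    exact bigC_zero_of_neg x hx hU (by omega)

lemma InM_bigY : InM (bigY x hx hU) := by
  constructor
  · intro s hs
    refine HahnSeries.ext (funext fun w => ?_)
    exact bigC_zero_of_neg x hx hU hs
  · intro w hw
    show bigC x 0 w = 0
    refine Finset.sum_eq_zero fun n _ => ?_
    rw [(hx n).2 w hw]
    simp

omit hx hU in
lemma InM_zero {S : Type*} [CommRing S] : InM (0 : LaurentSeries (LaurentSeries S)) :=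
  ⟨fun _ _ => rfl, fun _ _ => rfl⟩

/-- evaluation at `Xₘ = 1`, other variables `0`. -/
def em (m : ℕ) : MvPolynomial ℕ R →ₐ[R] R :=
  MvPolynomial.aeval (fun k => if k = m then (1 : R) else 0)

def e0 : MvPolynomial ℕ R →ₐ[R] R := MvPolynomial.aeval (fun _ => (0 : R))

lemma mapLL_em (m : ℕ) :
    mapLL (em (R := R) m).toRingHom (bigY x hx hU) = x m := by
  refine HahnSeries.ext (funext fun s => ?_)
  refine HahnSeries.ext (funext fun w => ?_)
  show (em (R := R) m) (bigC x s w) = ((x m).coeff s).coeff w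
  unfold bigC em
  rw [map_sum]
  have : ∀ n ∈ Finset.range ((max s w).toNat + 1),
      (MvPolynomial.aeval (fun k => if k = m then (1 : R) else 0))
        (MvPolynomial.X n * MvPolynomial.C (((x n).coeff s).coeff w)) =
      if n = m then ((x n).coeff s).coeff w else 0 := by
    intro n _
    rw [map_mul, MvPolynomial.aeval_X, MvPolynomial.aeval_C]
    simp [boole_mul]
  rw [Finset.sum_congr rfl this, Finset.sum_ite_eq' (Finset.range ((max s w).toNat + 1))]
  split_ifs with hm
  · rfl
  · rw [Finset.mem_range] at hm
    have : max s w < (m : ℤ) := by omega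
    exact (term_zero x hx hU this).symm

lemma mapLL_e0 :
    mapLL (e0 (R := R)).toRingHom (bigY x hx hU) = 0 := by
  refine HahnSeries.ext (funext fun s => ?_)
  refine HahnSeries.ext (funext fun w => ?_)
  show (e0 (R := R)) (bigC x s w) = ((0 : LaurentSeries (LaurentSeries R)).coeff s).coeff w
  have : ((0 : LaurentSeries (LaurentSeries R)).coeff s).coeff w = 0 := rfl
  rw [this]
  unfold bigC e0
  rw [map_sum]
  refine Finset.sum_eq_zero fun n _ => ?_
  rw [map_mul, MvPolynomial.aeval_X]
  simp

omit hx hU in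
/-- **Continuity of homomorphisms of group ind-schemes `𝔪 → 𝔾ₘ` (Prop. `lemma-main` (1)).**
Let `R` be a commutative ring and let `φ : 𝔪 → 𝔾ₘ` be a homomorphism of group functors over
`R` (i.e. a natural, in the `R`-algebra `S`, family of additive-to-multiplicative
homomorphisms `𝔪(S) → Sˣ`).  Then `φ`, restricted to `R`-points, is continuous for the
topology on `𝔪(R)` with basic open subgroups `𝔲_{i,j}(R)` and the discrete topology on `R*`:
there are `i, j` such that `φ` is trivial on `𝔲_{i,j}(R)`. -/
theorem hom_m_to_Gm_continuous
    (φ : ∀ (S : Type u) [CommRing S] [Algebra R S],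
      { x : LaurentSeries (LaurentSeries S) // InM x } → Sˣ)
    (hhom : ∀ (S : Type u) [CommRing S] [Algebra R S]
      (x y z : { x : LaurentSeries (LaurentSeries S) // InM x }),
      (z : LaurentSeries (LaurentSeries S)) =
        (x : LaurentSeries (LaurentSeries S)) + (y : LaurentSeries (LaurentSeries S)) →
      φ S z = φ S x * φ S y)
    (hnat : ∀ (S₁ S₂ : Type u) [CommRing S₁] [CommRing S₂] [Algebra R S₁] [Algebra R S₂]
      (ψ : S₁ →ₐ[R] S₂)
      (x : { x : LaurentSeries (LaurentSeries S₁) // InM x })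
      (y : { x : LaurentSeries (LaurentSeries S₂) // InM x }),
      (y : LaurentSeries (LaurentSeries S₂)) =
        mapLL ψ.toRingHom (x : LaurentSeries (LaurentSeries S₁)) →
      φ S₂ y = Units.map ψ.toRingHom.toMonoidHom (φ S₁ x)) :
    ∃ i j : ℕ, ∀ x : { x : LaurentSeries (LaurentSeries R) // InM x },
      MemUij i j (x : LaurentSeries (LaurentSeries R)) → φ R x = 1 := by
  by_contra hcon
  push_neg at hcon
  choose xs hxsU hxsne using fun n : ℕ => hcon n n
  set x : ℕ → LaurentSeries (LaurentSeries R) := fun n => (xs n : _) with hxdef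
  have hx : ∀ n, InM (x n) := fun n => (xs n).2
  have hU : ∀ n, MemUij n n (x n) := fun n => hxsU n
  -- the universal point
  set Y : { y : LaurentSeries (LaurentSeries (MvPolynomial ℕ R)) // InM y } :=
    ⟨bigY x hx hU, InM_bigY x hx hU⟩ with hYdef
  -- zero point over R
  set z0 : { y : LaurentSeries (LaurentSeries R) // InM y } := ⟨0, InM_zero⟩ with hz0
  -- φ R z0 = 1
  have hz0one : φ R z0 = 1 := by
    have h := hhom R z0 z0 z0 (by simp [hz0])
    have h2 : φ R z0 * 1 = φ R z0 * φ R z0 := by rw [mul_one]; exact h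
    exact (mul_left_cancel h2).symm
  -- the unit over the polynomial ring
  set uY : (MvPolynomial ℕ R)ˣ := φ (MvPolynomial ℕ R) Y with huY
  -- pick a variable not occurring in uY
  obtain ⟨m, hm⟩ := Infinite.exists_notMem_finset ((uY : MvPolynomial ℕ R).vars)
  -- naturality for em m
  have h1 : φ R (xs m) = Units.map (em (R := R) m).toRingHom.toMonoidHom uY :=
    hnat (MvPolynomial ℕ R) R (em m) Y (xs m) (mapLL_em x hx hU m).symm
  have h2 : φ R z0 = Units.map (e0 (R := R)).toRingHom.toMonoidHom uY :=
    hnat (MvPolynomial ℕ R) R e0 Y z0 (mapLL_e0 x hx hU).symm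
  -- both evaluations agree on uY
  have hval : (em (R := R) m) (uY : MvPolynomial ℕ R)
      = (e0 (R := R)) (uY : MvPolynomial ℕ R) := by
    unfold em e0
    rw [MvPolynomial.aeval_eq_constantCoeff_of_vars
          (fun i hi => by simp [show i ≠ m from fun h => hm (h ▸ hi)]),
        MvPolynomial.aeval_eq_constantCoeff_of_vars (fun i _ => rfl)]
  refine hxsne m ?_
  rw [h1, ← hz0one, h2]
  exact Units.ext hval


end CC
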